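/- Let F_q have q = p^s elements with p prime and p | s, and let ℓ ≥ 0 be an integer. If β ∈ F_q is a root of x^p - x - 1, then x^{p^{ℓ+1}} - x^{p^ℓ} - 1 = ∏_{i=0}^{p-1} (x - (β + i))^{p^ℓ} in F_q[x]. -/

import Mathlib

open Polynomial

theorem stmt16 {F : Type*} [Field F] [Fintype F] (p s : ℕ) [Fact p.Prime] [CharP F p]
    (hcard : Fintype.card F = p ^ s) (hps : p ∣ s) (ℓ : ℕ)
    (β : F) (hβ : β ^ p - β - 1 = 0) :
    (X ^ (p ^ (ℓ + 1)) - X ^ (p ^ ℓ) - 1 : Polynomial F) =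
      ∏ i ∈ Finset.range p, (X - C (β + (i : F))) ^ (p ^ ℓ) := by
  have hp : p.Prime := Fact.out
  have hp1 : 1 < p := hp.one_lt
  set P : Polynomial F := X ^ p - X - 1 with hP
  have hdegX1 : (X + 1 : Polynomial F).degree < (p : WithBot ℕ) := by
    have h1 : (X + 1 : Polynomial F).degree = 1 := by
      simpa using Polynomial.degree_X_add_C (1 : F)
    rw [h1]
    exact_mod_cast hp1
  have hPeq : P = X ^ p - (X + 1) := by ring
  have hPmonic : P.Monic := by
    rw [hPeq]; exact Polynomial.monic_X_pow_sub hdegX1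
  have hPdeg' : P.degree = p := by
    rw [hPeq]
    rw [Polynomial.degree_sub_eq_left_of_degree_lt
      (by rwa [Polynomial.degree_X_pow])]
    exact Polynomial.degree_X_pow p
  have hPdeg : P.natDegree = p := Polynomial.natDegree_eq_of_degree_eq_some hPdeg'
  -- each β + i is a root of P
  have hroot : ∀ i ∈ Finset.range p, (β + (i : F)) ∈ P.roots := by
    intro i _
    rw [Polynomial.mem_roots hPmonic.ne_zero, Polynomial.IsRoot.def, hP]
    simp only [Polynomial.eval_sub, Polynomial.eval_pow, Polynomial.eval_X,
      Polynomial.eval_one]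
    have hip : (i : F) ^ p = (i : F) := by
      have h := map_natCast (frobenius F p) i
      rwa [frobenius_def] at h
    calc (β + (i : F)) ^ p - (β + (i : F)) - 1
        = (β ^ p - β - 1) + ((i : F) ^ p - (i : F)) := by
          rw [add_pow_char]; ring
      _ = 0 := by rw [hβ, hip]; ring
  -- the multiset of β + i, i < p
  set m : Multiset F := (Finset.range p).val.map (fun i : ℕ => β + (i : F)) with hm
  have hmnodup : m.Nodup := by
    refine Multiset.Nodup.map_on ?_ (Finset.range p).nodup
    intro a ha b hb hab
    have ha' : a < p := Finset.mem_range.mp ha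
    have hb' : b < p := Finset.mem_range.mp hb
    exact CharP.natCast_injOn_Iio F p ha' hb' (add_left_cancel hab)
  have hmle : m ≤ P.roots := (Multiset.le_iff_subset hmnodup).mpr (by
    intro x hx
    obtain ⟨i, hi, rfl⟩ := Multiset.mem_map.mp hx
    exact hroot i hi)
  have hdvd : (m.map fun a => X - C a).prod ∣ P :=
    (Multiset.prod_X_sub_C_dvd_iff_le_roots hPmonic.ne_zero m).mpr hmle
  have hmcard : Multiset.card m = p := by simp [hm]
  have hprodmonic : ((m.map fun a => X - C a).prod).Monic :=
    Polynomial.monic_multiset_prod_of_monic _ _ fun a _ => Polynomial.monic_X_sub_C a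
  have hproddeg : ((m.map fun a => X - C a).prod).natDegree = p := by
    rw [Polynomial.natDegree_multiset_prod_of_monic _ (fun a _ => ?_)]
    · simp [hmcard]
    · obtain ⟨b, _, rfl⟩ := Multiset.mem_map.mp ‹a ∈ _›
      exact Polynomial.monic_X_sub_C b
  have hbase : P = (m.map fun a => X - C a).prod :=
    Polynomial.eq_of_monic_of_dvd_of_natDegree_le hprodmonic hPmonic hdvd
      (by rw [hPdeg, hproddeg])
  have hbase' : P = ∏ i ∈ Finset.range p, (X - C (β + (i : F))) := by
    rw [hbase, hm]
    rw [Finset.prod]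
    rw [Multiset.map_map]
    rfl
  -- raise to the p^ℓ power
  have hchar : CharP (Polynomial F) p := Polynomial.instCharP p
  have hpow : P ^ (p ^ ℓ) = X ^ (p ^ (ℓ + 1)) - X ^ (p ^ ℓ) - 1 := by
    rw [hP, sub_pow_char_pow, sub_pow_char_pow, one_pow, ← pow_mul, ← pow_succ']
  rw [← hpow, hbase', ← Finset.prod_pow]
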